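/- Let C > 0 and α ∈ (0,1). Suppose v : [0,∞) → ℝ is nonnegative and differentiable, and its derivative satisfies v'(t) ≤ -C·v(t)^α for all t ≥ 0. Then v(t) = 0 for every t ≥ v(0)^{1-α}/(C(1-α)). (This is the finite-time case 0 ≤ α < 1 of the Lyapunov comparison theorem, applied to v(t) = V(z(t)) along a trajectory.) -/

import Mathlib

/-- Finite-time case `0 < α < 1` of the Lyapunov comparison theorem: if a nonnegative
differentiable function `v` satisfies `v' ≤ -C v^α` on `[0,∞)`, then `v` vanishes for all
`t ≥ v(0)^{1-α}/(C(1-α))`. -/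
theorem stmt0 (C α : ℝ) (hC : 0 < C) (hα0 : 0 < α) (hα1 : α < 1)
    (v : ℝ → ℝ)
    (hnn : ∀ t, 0 ≤ t → 0 ≤ v t)
    (hdiff : ∀ t, 0 ≤ t → DifferentiableAt ℝ v t)
    (hineq : ∀ t, 0 ≤ t → deriv v t ≤ -C * v t ^ α) :
    ∀ t, v 0 ^ (1 - α) / (C * (1 - α)) ≤ t → v t = 0 := by
  have h1α : 0 < 1 - α := by linarith
  have hden : 0 < C * (1 - α) := mul_pos hC h1α
  intro t ht
  have ht0 : 0 ≤ t :=
    le_trans (div_nonneg (Real.rpow_nonneg (hnn 0 le_rfl) _) hden.le) ht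
  by_contra hne
  have hvt : 0 < v t := lt_of_le_of_ne (hnn t ht0) (Ne.symm hne)
  -- v is antitone on [0,∞)
  have hanti : AntitoneOn v (Set.Ici 0) := by
    apply antitoneOn_of_deriv_nonpos (convex_Ici 0)
    · exact fun x hx => (hdiff x hx).continuousAt.continuousWithinAt
    · exact fun x hx => ((hdiff x (le_of_lt (by simpa using hx))).differentiableWithinAt)
    · intro x hx
      have hx0 : (0:ℝ) < x := by simpa using hx
      have h1 := hineq x hx0.le
      have h2 : 0 ≤ v x ^ α := Real.rpow_nonneg (hnn x hx0.le) α
      nlinarith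
  have hvpos : ∀ s ∈ Set.Icc (0:ℝ) t, 0 < v s := by
    intro s hs
    exact lt_of_lt_of_le hvt (hanti hs.1 (Set.mem_Ici.mpr ht0) hs.2)
  set g : ℝ → ℝ := fun s => v s ^ (1 - α) + C * (1 - α) * s with hg
  have hderiv : ∀ s ∈ Set.Icc (0:ℝ) t,
      HasDerivAt g ((1 - α) * v s ^ (1 - α - 1) * deriv v s + C * (1 - α)) s := by
    intro s hs
    have h1 : HasDerivAt (fun x : ℝ => x ^ (1 - α)) ((1 - α) * v s ^ (1 - α - 1)) (v s) :=
      Real.hasDerivAt_rpow_const (Or.inl (hvpos s hs).ne')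
    have h2 : HasDerivAt v (deriv v s) s := (hdiff s hs.1).hasDerivAt
    have h3 := h1.comp s h2
    have h4 : HasDerivAt (fun x : ℝ => C * (1 - α) * x) (C * (1 - α)) s := by
      simpa using (hasDerivAt_id s).const_mul (C * (1 - α))
    simpa [hg, Function.comp_def, Pi.add_def, mul_comm, mul_assoc, mul_left_comm] using h3.add h4
  have hdnp : ∀ s ∈ Set.Icc (0:ℝ) t,
      (1 - α) * v s ^ (1 - α - 1) * deriv v s + C * (1 - α) ≤ 0 := by
    intro s hs
    have hv : 0 < v s := hvpos s hs
    have h1 := hineq s hs.1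
    have hpow : 0 < v s ^ (1 - α - 1) := Real.rpow_pos_of_pos hv _
    have hmul : v s ^ (1 - α - 1) * v s ^ α = 1 := by
      rw [← Real.rpow_add hv]
      norm_num
    have : (1 - α) * v s ^ (1 - α - 1) * deriv v s
        ≤ (1 - α) * v s ^ (1 - α - 1) * (-C * v s ^ α) := by
      apply mul_le_mul_of_nonneg_left h1
      positivity
    nlinarith
  have hgA : AntitoneOn g (Set.Icc 0 t) := by
    apply antitoneOn_of_deriv_nonpos (convex_Icc 0 t)
    · exact fun x hx => (hderiv x hx).continuousAt.continuousWithinAt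
    · intro x hx
      exact (hderiv x (interior_subset hx)).differentiableAt.differentiableWithinAt
    · intro x hx
      rw [(hderiv x (interior_subset hx)).deriv]
      exact hdnp x (interior_subset hx)
  have hkey : g t ≤ g 0 :=
    hgA (Set.left_mem_Icc.mpr ht0) (Set.right_mem_Icc.mpr ht0) ht0
  have hCt : v 0 ^ (1 - α) ≤ C * (1 - α) * t := by
    rw [div_le_iff₀ hden] at ht
    linarith [ht]
  have hvt' : 0 < v t ^ (1 - α) := Real.rpow_pos_of_pos hvt _
  simp only [hg] at hkey
  nlinarith
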